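/- Let Λ = ∧⁴ M₄(ℤ) inside V = ∧⁴ M₄(ℚ), let ι₀ : M₂(ℚ) → M₄(ℚ) be A ↦ diag-block(A,A), and let v₀ = ι₀(e₁) ∧ ι₀(e₂) ∧ ι₀(e₃) ∧ ι₀(e₄), where e₁,…,e₄ is the standard basis of M₂(ℤ) (matrix units). Let G = GSp₄ act on V by ρ_L = (∧⁴ of left multiplication) ⊗ det^{−1}. Then the stabiliser of v₀ in GSp₄ equals the image ι₀(GL₂) ∩ GSp₄, i.e. the block-diagonally embedded GL₂. -/

import Mathlib

set_option maxRecDepth 10000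
set_option maxHeartbeats 2000000

open Matrix

/-- The standard symplectic form on `ℚ⁴`, with Gram matrix `diag(J, J)`,
`J = [[0,1],[−1,0]]`. -/
def stdSympQ (x y : Fin 4 → ℚ) : ℚ :=
  x 0 * y 1 - x 1 * y 0 + x 2 * y 3 - x 3 * y 2

/-- The block-diagonal embedding `ι₀ : M₂(ℚ) → M₄(ℚ)`, `A ↦ diag(A, A)`. -/
def iota0 (A : Matrix (Fin 2) (Fin 2) ℚ) : Matrix (Fin 4) (Fin 4) ℚ :=
  Matrix.reindex (finSumFinEquiv (m := 2) (n := 2)) (finSumFinEquiv (m := 2) (n := 2))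
    (Matrix.fromBlocks A 0 0 A)

/-- The wedge `w₁ ∧ w₂ ∧ w₃ ∧ w₄` in `∧• M₄(ℚ)`, as a product in the exterior algebra. -/
noncomputable def wedge4 (w₁ w₂ w₃ w₄ : Matrix (Fin 4) (Fin 4) ℚ) :
    ExteriorAlgebra ℚ (Matrix (Fin 4) (Fin 4) ℚ) :=
  ExteriorAlgebra.ι ℚ w₁ * ExteriorAlgebra.ι ℚ w₂ *
    ExteriorAlgebra.ι ℚ w₃ * ExteriorAlgebra.ι ℚ w₄

/-- The vector `v₀ = ι₀(e₁) ∧ ι₀(e₂) ∧ ι₀(e₃) ∧ ι₀(e₄)`, where `e₁,…,e₄` are the matrix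
units of `M₂`. -/
noncomputable def v0 : ExteriorAlgebra ℚ (Matrix (Fin 4) (Fin 4) ℚ) :=
  wedge4 (iota0 (Matrix.single 0 0 1)) (iota0 (Matrix.single 0 1 1))
    (iota0 (Matrix.single 1 0 1)) (iota0 (Matrix.single 1 1 1))

/-! ### Auxiliary definitions and lemmas -/

namespace StabAux

open ExteriorAlgebra

abbrev M4 := Matrix (Fin 4) (Fin 4) ℚ

/-! #### Properties of `iota0` -/

lemma iota0_mul (A B : Matrix (Fin 2) (Fin 2) ℚ) : iota0 A * iota0 B = iota0 (A * B) := by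
  simp [iota0, Matrix.reindex_apply, Matrix.submatrix_mul_equiv, Matrix.fromBlocks_multiply]

lemma iota0_one : iota0 1 = 1 := by
  simp [iota0, Matrix.fromBlocks_one]

lemma iota0_add (A B : Matrix (Fin 2) (Fin 2) ℚ) : iota0 (A + B) = iota0 A + iota0 B := by
  ext i j
  simp only [iota0, Matrix.reindex_apply, Matrix.submatrix_apply, Matrix.add_apply]
  rcases (finSumFinEquiv (m := 2) (n := 2)).symm i with k | k <;>
    rcases (finSumFinEquiv (m := 2) (n := 2)).symm j with l | l <;>
    simp [Matrix.fromBlocks]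

lemma iota0_smul (a : ℚ) (A : Matrix (Fin 2) (Fin 2) ℚ) : iota0 (a • A) = a • iota0 A := by
  ext i j
  simp only [iota0, Matrix.reindex_apply, Matrix.submatrix_apply, Matrix.smul_apply]
  rcases (finSumFinEquiv (m := 2) (n := 2)).symm i with k | k <;>
    rcases (finSumFinEquiv (m := 2) (n := 2)).symm j with l | l <;>
    simp [Matrix.fromBlocks]

lemma det_iota0 (A : Matrix (Fin 2) (Fin 2) ℚ) : (iota0 A).det = A.det ^ 2 := by
  simp [iota0, Matrix.det_fromBlocks_zero₂₁, sq]

lemma iota0_eq (A : Matrix (Fin 2) (Fin 2) ℚ) :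
    iota0 A = !![A 0 0, A 0 1, 0, 0; A 1 0, A 1 1, 0, 0;
                 0, 0, A 0 0, A 0 1; 0, 0, A 1 0, A 1 1] := by
  ext i j
  fin_cases i <;> fin_cases j <;> rfl

/-! #### Anticommutation and multilinearity of `wedge4` -/

lemma ia (x y : M4) : ι ℚ y * ι ℚ x = -(ι ℚ x * ι ℚ y) :=
  eq_neg_of_add_eq_zero_right (ι_add_mul_swap x y)

lemma wedge4_swap12 (x y z w : M4) : wedge4 y x z w = -wedge4 x y z w := by
  unfold wedge4; rw [ia x y]; simp [neg_mul, mul_neg, mul_assoc]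

lemma wedge4_swap23 (x y z w : M4) : wedge4 x z y w = -wedge4 x y z w := by
  unfold wedge4; rw [mul_assoc (ι ℚ x) (ι ℚ z) (ι ℚ y), ia y z]
  simp [neg_mul, mul_neg, mul_assoc]

lemma wedge4_swap34 (x y z w : M4) : wedge4 x y w z = -wedge4 x y z w := by
  unfold wedge4; rw [mul_assoc (ι ℚ x * ι ℚ y) (ι ℚ w) (ι ℚ z), ia z w]
  simp [neg_mul, mul_neg, mul_assoc]

lemma wedge4_13 (x y w : M4) : wedge4 x y x w = 0 := by
  unfold wedge4
  rw [mul_assoc (ι ℚ x), ia, mul_neg, ← mul_assoc, ι_sq_zero, zero_mul, neg_zero, zero_mul]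

lemma wedge4_23eq (x y z : M4) : wedge4 x y y z = 0 := by
  unfold wedge4
  rw [mul_assoc (ι ℚ x), ι_sq_zero, mul_zero, zero_mul]

lemma wedge4_24 (x y z : M4) : wedge4 x y z y = 0 := by
  have h := wedge4_swap34 x y y z
  rw [wedge4_23eq] at h
  simpa using h

lemma wedge4_add1 (x x' y z w : M4) :
    wedge4 (x + x') y z w = wedge4 x y z w + wedge4 x' y z w := by
  simp [wedge4, add_mul]

lemma wedge4_add2 (x y y' z w : M4) :
    wedge4 x (y + y') z w = wedge4 x y z w + wedge4 x y' z w := by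
  simp [wedge4, mul_add, add_mul]

lemma wedge4_add3 (x y z z' w : M4) :
    wedge4 x y (z + z') w = wedge4 x y z w + wedge4 x y z' w := by
  simp [wedge4, mul_add, add_mul]

lemma wedge4_add4 (x y z w w' : M4) :
    wedge4 x y z (w + w') = wedge4 x y z w + wedge4 x y z w' := by
  simp [wedge4, mul_add]

lemma wedge4_smul1 (a : ℚ) (x y z w : M4) : wedge4 (a • x) y z w = a • wedge4 x y z w := by
  simp [wedge4, smul_mul_assoc]

lemma wedge4_smul2 (a : ℚ) (x y z w : M4) : wedge4 x (a • y) z w = a • wedge4 x y z w := by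
  simp [wedge4, smul_mul_assoc, mul_smul_comm]

lemma wedge4_smul3 (a : ℚ) (x y z w : M4) : wedge4 x y (a • z) w = a • wedge4 x y z w := by
  simp [wedge4, smul_mul_assoc, mul_smul_comm]

lemma wedge4_smul4 (a : ℚ) (x y z w : M4) : wedge4 x y z (a • w) = a • wedge4 x y z w := by
  simp [wedge4, mul_smul_comm]

/-- The key multilinear expansion: a "block scalar" substitution scales a 4-fold wedge by the
square of a 2×2 determinant. -/
lemma wedge4_comb (a b c d : ℚ) (x1 x2 x3 x4 : M4) :
    wedge4 (a•x1 + c•x3) (a•x2 + c•x4) (b•x1 + d•x3) (b•x2 + d•x4)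
      = ((a*d - b*c)^2) • wedge4 x1 x2 x3 x4 := by
  simp only [wedge4_add1, wedge4_add2, wedge4_add3, wedge4_add4,
    wedge4_smul1, wedge4_smul2, wedge4_smul3, wedge4_smul4, smul_smul,
    wedge4_13, wedge4_24, smul_zero, add_zero, zero_add]
  rw [show wedge4 x1 x4 x3 x2 = -wedge4 x1 x2 x3 x4 by
        rw [wedge4_swap34, wedge4_swap23, wedge4_swap34]; simp,
      show wedge4 x3 x2 x1 x4 = -wedge4 x1 x2 x3 x4 by
        rw [wedge4_swap12, wedge4_swap23, wedge4_swap12]; simp,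
      show wedge4 x3 x4 x1 x2 = wedge4 x1 x2 x3 x4 by
        rw [wedge4_swap23, wedge4_swap12, wedge4_swap34, wedge4_swap23]; simp]
  module

/-! #### `wedge4` and `ιMulti` -/

lemma wedge4_eq_prod (w₁ w₂ w₃ w₄ : M4) :
    wedge4 w₁ w₂ w₃ w₄ = (List.ofFn fun j => ι ℚ (![w₁, w₂, w₃, w₄] j)).prod := by
  simp [wedge4, List.ofFn_succ, mul_assoc]

lemma ι_mul_wedge4_self (w₁ w₂ w₃ w₄ : M4) (i : Fin 4) :
    ι ℚ (![w₁, w₂, w₃, w₄] i) * wedge4 w₁ w₂ w₃ w₄ = 0 := by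
  rw [wedge4_eq_prod]
  exact ι_mul_prod_list _ i

/-! #### Coordinate functionals on the exterior algebra -/

def coordSel (p : Fin 5 → Fin 4 × Fin 4) : M4 →ₗ[ℚ] (Fin 5 → ℚ) where
  toFun x := fun j => x (p j).1 (p j).2
  map_add' x y := by ext j; simp [Matrix.add_apply]
  map_smul' a x := by ext j; simp [Matrix.smul_apply]

noncomputable def phi (p : Fin 5 → Fin 4 × Fin 4) :
    ExteriorAlgebra ℚ M4 →ₗ[ℚ] ℚ :=
  ExteriorAlgebra.liftAlternating
    (Function.update (fun i => (0 : M4 [⋀^Fin i]→ₗ[ℚ] ℚ)) 5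
      ((Matrix.detRowAlternating (n := Fin 5) (R := ℚ)).compLinearMap (coordSel p)))

lemma ι_mul_wedge4_eq_ιMulti (x w₁ w₂ w₃ w₄ : M4) :
    ι ℚ x * wedge4 w₁ w₂ w₃ w₄ = ιMulti ℚ 5 ![x, w₁, w₂, w₃, w₄] := by
  simp [wedge4, ιMulti_apply, List.ofFn_succ, mul_assoc]

lemma phi_apply (p : Fin 5 → Fin 4 × Fin 4) (x w₁ w₂ w₃ w₄ : M4) :
    phi p (ι ℚ x * wedge4 w₁ w₂ w₃ w₄) =
      Matrix.detRowAlternating (fun i => coordSel p (![x, w₁, w₂, w₃, w₄] i)) := by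
  rw [ι_mul_wedge4_eq_ιMulti, phi, liftAlternating_apply_ιMulti, Function.update_self,
    AlternatingMap.compLinearMap_apply]

lemma detRA_eq (v : Fin 5 → Fin 5 → ℚ) :
    Matrix.detRowAlternating v = (Matrix.of v).det := rfl

/-! #### The spanning vectors `u₁, …, u₄` -/

noncomputable def u₁ : M4 := iota0 (Matrix.single 0 0 1)
noncomputable def u₂ : M4 := iota0 (Matrix.single 0 1 1)
noncomputable def u₃ : M4 := iota0 (Matrix.single 1 0 1)
noncomputable def u₄ : M4 := iota0 (Matrix.single 1 1 1)

lemma u₁_eq : u₁ = !![1,0,0,0; 0,0,0,0; 0,0,1,0; 0,0,0,0] := by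
  rw [u₁, iota0_eq]; norm_num [Matrix.single]
lemma u₂_eq : u₂ = !![0,1,0,0; 0,0,0,0; 0,0,0,1; 0,0,0,0] := by
  rw [u₂, iota0_eq]; norm_num [Matrix.single]
lemma u₃_eq : u₃ = !![0,0,0,0; 1,0,0,0; 0,0,0,0; 0,0,1,0] := by
  rw [u₃, iota0_eq]; norm_num [Matrix.single]
lemma u₄_eq : u₄ = !![0,0,0,0; 0,1,0,0; 0,0,0,0; 0,0,0,1] := by
  rw [u₄, iota0_eq]; norm_num [Matrix.single]

lemma v0_eq : v0 = wedge4 u₁ u₂ u₃ u₄ := rfl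

/-! #### Step B: membership in the image of `iota0` -/

lemma det5 (a b c d e p q r s : ℚ) :
    (!![a,b,c,d,e; p,1,0,0,0; q,0,1,0,0; r,0,0,1,0; s,0,0,0,1] :
      Matrix (Fin 5) (Fin 5) ℚ).det = a - b*p - c*q - d*r - e*s := by
  simp [Matrix.det_succ_row_zero, Fin.sum_univ_succ]
  simp [Fin.succAbove, Fin.lt_iff_val_lt_val]
  ring

lemma exists_of_ι_mul_v0_eq_zero (x : M4) (hx : ι ℚ x * v0 = 0) :
    ∃ A : Matrix (Fin 2) (Fin 2) ℚ, x = iota0 A := by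
  have key : ∀ p : Fin 5 → Fin 4 × Fin 4,
      (Matrix.of fun i => coordSel p (![x, u₁, u₂, u₃, u₄] i)).det = 0 := by
    intro p
    rw [← detRA_eq, ← phi_apply, ← v0_eq, hx, map_zero]
  have conv : ∀ (q : Fin 4 × Fin 4) (p' q' r' s' : ℚ),
      u₁ q.1 q.2 = p' → u₂ q.1 q.2 = q' → u₃ q.1 q.2 = r' → u₄ q.1 q.2 = s' →
      x q.1 q.2 - x 0 0 * p' - x 0 1 * q' - x 1 0 * r' - x 1 1 * s' = 0 := by
    intro q p' q' r' s' h1 h2 h3 h4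
    have hk := key ![q,(0,0),(0,1),(1,0),(1,1)]
    rw [show (Matrix.of fun i => coordSel ![q,(0,0),(0,1),(1,0),(1,1)]
          (![x, u₁, u₂, u₃, u₄] i)) =
        !![x q.1 q.2, x 0 0, x 0 1, x 1 0, x 1 1;
           u₁ q.1 q.2, 1, 0, 0, 0;
           u₂ q.1 q.2, 0, 1, 0, 0;
           u₃ q.1 q.2, 0, 0, 1, 0;
           u₄ q.1 q.2, 0, 0, 0, 1] from by
      ext i j
      fin_cases i <;> fin_cases j <;>
        simp [coordSel, u₁_eq, u₂_eq, u₃_eq, u₄_eq, Matrix.vecHead, Matrix.vecTail]] at hk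
    rw [h1, h2, h3, h4, det5] at hk
    exact hk
  have e02 := conv (0,2) 0 0 0 0 (by rw [u₁_eq]; rfl) (by rw [u₂_eq]; rfl)
    (by rw [u₃_eq]; rfl) (by rw [u₄_eq]; rfl)
  have e03 := conv (0,3) 0 0 0 0 (by rw [u₁_eq]; rfl) (by rw [u₂_eq]; rfl)
    (by rw [u₃_eq]; rfl) (by rw [u₄_eq]; rfl)
  have e12 := conv (1,2) 0 0 0 0 (by rw [u₁_eq]; rfl) (by rw [u₂_eq]; rfl)
    (by rw [u₃_eq]; rfl) (by rw [u₄_eq]; rfl)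
  have e13 := conv (1,3) 0 0 0 0 (by rw [u₁_eq]; rfl) (by rw [u₂_eq]; rfl)
    (by rw [u₃_eq]; rfl) (by rw [u₄_eq]; rfl)
  have e20 := conv (2,0) 0 0 0 0 (by rw [u₁_eq]; rfl) (by rw [u₂_eq]; rfl)
    (by rw [u₃_eq]; rfl) (by rw [u₄_eq]; rfl)
  have e21 := conv (2,1) 0 0 0 0 (by rw [u₁_eq]; rfl) (by rw [u₂_eq]; rfl)
    (by rw [u₃_eq]; rfl) (by rw [u₄_eq]; rfl)
  have e30 := conv (3,0) 0 0 0 0 (by rw [u₁_eq]; rfl) (by rw [u₂_eq]; rfl)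
    (by rw [u₃_eq]; rfl) (by rw [u₄_eq]; rfl)
  have e31 := conv (3,1) 0 0 0 0 (by rw [u₁_eq]; rfl) (by rw [u₂_eq]; rfl)
    (by rw [u₃_eq]; rfl) (by rw [u₄_eq]; rfl)
  have e22 := conv (2,2) 1 0 0 0 (by rw [u₁_eq]; rfl) (by rw [u₂_eq]; rfl)
    (by rw [u₃_eq]; rfl) (by rw [u₄_eq]; rfl)
  have e23 := conv (2,3) 0 1 0 0 (by rw [u₁_eq]; rfl) (by rw [u₂_eq]; rfl)
    (by rw [u₃_eq]; rfl) (by rw [u₄_eq]; rfl)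
  have e32 := conv (3,2) 0 0 1 0 (by rw [u₁_eq]; rfl) (by rw [u₂_eq]; rfl)
    (by rw [u₃_eq]; rfl) (by rw [u₄_eq]; rfl)
  have e33 := conv (3,3) 0 0 0 1 (by rw [u₁_eq]; rfl) (by rw [u₂_eq]; rfl)
    (by rw [u₃_eq]; rfl) (by rw [u₄_eq]; rfl)
  norm_num at e02 e03 e12 e13 e20 e21 e30 e31 e22 e23 e32 e33
  refine ⟨!![x 0 0, x 0 1; x 1 0, x 1 1], ?_⟩
  rw [iota0_eq]
  ext i j
  fin_cases i <;> fin_cases j <;> norm_num [Matrix.vecHead, Matrix.vecTail] <;>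
    first
      | exact e02 | exact e03 | exact e12 | exact e13
      | exact e20 | exact e21 | exact e30 | exact e31
      | exact sub_eq_zero.mp e22 | exact sub_eq_zero.mp e23
      | exact sub_eq_zero.mp e32 | exact sub_eq_zero.mp e33

end StabAux

open StabAux ExteriorAlgebra in
theorem stabiliser_of_v0_eq_blockdiag_GL2
    (g : Matrix (Fin 4) (Fin 4) ℚ) (hg : IsUnit g)
    (hGSp : ∃ ν : ℚ, ∀ x y : Fin 4 → ℚ,
      stdSympQ (g.mulVec x) (g.mulVec y) = ν * stdSympQ x y) :
    (g.det)⁻¹ • wedge4 (g * iota0 (Matrix.single 0 0 1))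
        (g * iota0 (Matrix.single 0 1 1))
        (g * iota0 (Matrix.single 1 0 1))
        (g * iota0 (Matrix.single 1 1 1)) = v0
      ↔ ∃ A : Matrix (Fin 2) (Fin 2) ℚ, IsUnit A ∧ g = iota0 A := by
  have hdet : g.det ≠ 0 := by
    have := (Matrix.isUnit_iff_isUnit_det g).mp hg
    exact IsUnit.ne_zero this
  constructor
  · intro h
    -- `g = w₁ + w₄` where `wᵢ = g * uᵢ`
    have hsum : g = g * u₁ + g * u₄ := by
      rw [← mul_add, u₁, u₄, ← iota0_add]
      rw [show Matrix.single (0 : Fin 2) (0 : Fin 2) (1:ℚ) +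
          Matrix.single 1 1 1 = 1 by
        ext i j; fin_cases i <;> fin_cases j <;> simp [Matrix.single]]
      rw [iota0_one, mul_one]
    have hzero : ι ℚ g * v0 = 0 := by
      rw [← h, mul_smul_comm]
      have h1 : ι ℚ (g * u₁) * wedge4 (g * u₁) (g * u₂) (g * u₃) (g * u₄) = 0 := by
        simpa using ι_mul_wedge4_self (g * u₁) (g * u₂) (g * u₃) (g * u₄) 0
      have h4 : ι ℚ (g * u₄) * wedge4 (g * u₁) (g * u₂) (g * u₃) (g * u₄) = 0 := by
        simpa using ι_mul_wedge4_self (g * u₁) (g * u₂) (g * u₃) (g * u₄) 3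
      calc g.det⁻¹ • (ι ℚ g * wedge4 (g * u₁) (g * u₂) (g * u₃) (g * u₄))
          = g.det⁻¹ • ((ι ℚ (g * u₁) + ι ℚ (g * u₄)) *
              wedge4 (g * u₁) (g * u₂) (g * u₃) (g * u₄)) := by
            rw [← map_add]; rw [← hsum]
        _ = 0 := by rw [add_mul, h1, h4, add_zero, smul_zero]
    obtain ⟨A, hA⟩ := exists_of_ι_mul_v0_eq_zero g hzero
    refine ⟨A, ?_, hA⟩
    rw [Matrix.isUnit_iff_isUnit_det, isUnit_iff_ne_zero]
    intro hA0
    apply hdet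
    rw [hA, det_iota0, hA0]
    norm_num
  · rintro ⟨A, hA, rfl⟩
    have hAdet : A.det ≠ 0 := IsUnit.ne_zero ((Matrix.isUnit_iff_isUnit_det A).mp hA)
    rw [iota0_mul, iota0_mul, iota0_mul, iota0_mul]
    have he1 : A * Matrix.single 0 0 1 =
        A 0 0 • Matrix.single 0 0 1 + A 1 0 • Matrix.single 1 0 1 := by
      ext i j; fin_cases i <;> fin_cases j <;>
        simp [Matrix.mul_apply, Matrix.single, Fin.sum_univ_succ]
    have he2 : A * Matrix.single 0 1 1 =
        A 0 0 • Matrix.single 0 1 1 + A 1 0 • Matrix.single 1 1 1 := by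
      ext i j; fin_cases i <;> fin_cases j <;>
        simp [Matrix.mul_apply, Matrix.single, Fin.sum_univ_succ]
    have he3 : A * Matrix.single 1 0 1 =
        A 0 1 • Matrix.single 0 0 1 + A 1 1 • Matrix.single 1 0 1 := by
      ext i j; fin_cases i <;> fin_cases j <;>
        simp [Matrix.mul_apply, Matrix.single, Fin.sum_univ_succ]
    have he4 : A * Matrix.single 1 1 1 =
        A 0 1 • Matrix.single 0 1 1 + A 1 1 • Matrix.single 1 1 1 := by
      ext i j; fin_cases i <;> fin_cases j <;>
        simp [Matrix.mul_apply, Matrix.single, Fin.sum_univ_succ]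
    rw [he1, he2, he3, he4, iota0_add, iota0_add, iota0_add, iota0_add,
      iota0_smul, iota0_smul, iota0_smul, iota0_smul, iota0_smul, iota0_smul,
      iota0_smul, iota0_smul]
    rw [wedge4_comb (A 0 0) (A 0 1) (A 1 0) (A 1 1)
      (iota0 (Matrix.single 0 0 1)) (iota0 (Matrix.single 0 1 1))
      (iota0 (Matrix.single 1 0 1)) (iota0 (Matrix.single 1 1 1))]
    rw [det_iota0]
    have hv : wedge4 (iota0 (Matrix.single 0 0 1)) (iota0 (Matrix.single 0 1 1))
        (iota0 (Matrix.single 1 0 1)) (iota0 (Matrix.single 1 1 1)) = v0 := rfl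
    rw [hv, show A 0 0 * A 1 1 - A 0 1 * A 1 0 = A.det from (Matrix.det_fin_two A).symm,
      smul_smul, inv_mul_cancel₀ (by positivity), one_smul]
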